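/- Let d ≥ 3 and let θ₁, ..., θ_d ∈ [0, π] with θ_j ≤ π/2 for all j ≥ 2. Let A be the d×d partial symmetric matrix with unit diagonal and specified entries A_{j,j+1} = cos θ_j for j ∈ [d−1] and A_{1,d} = cos θ_d (all other off-diagonal entries unspecified). Then A admits a positive semi-definite completion if and only if 2·max_{j∈[d]} θ_j ≤ Σ_{j=1}^d θ_j. -/

import Mathlib

set_option maxHeartbeats 1000000

open Real Finset

namespace Stmt6Aux

/-- inner product of the first `n` coordinates -/
def ip (n : ℕ) (u w : ℕ → ℝ) : ℝ := ∑ k ∈ Finset.range n, u k * w k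

lemma ip_comm (n : ℕ) (u w : ℕ → ℝ) : ip n u w = ip n w u := by
  simp [ip, mul_comm]

lemma ip_succ (n : ℕ) (u w : ℕ → ℝ) : ip (n+1) u w = ip n u w + u n * w n :=
  Finset.sum_range_succ _ n

lemma psd_det_nonneg {n : Type*} [Fintype n] [DecidableEq n] {M : Matrix n n ℝ}
    (h : M.PosSemidef) : 0 ≤ M.det := by
  rw [h.isHermitian.det_eq_prod_eigenvalues]
  exact Finset.prod_nonneg fun i _ => by exact_mod_cast h.eigenvalues_nonneg i

lemma psd_entry_bounds {d : ℕ} {S : Matrix (Fin d) (Fin d) ℝ} (hS : S.PosSemidef)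
    (h1 : ∀ i, S i i = 1) (i j : Fin d) : -1 ≤ S i j ∧ S i j ≤ 1 := by
  have h2 : (S.submatrix ![i,j] ![i,j]).PosSemidef := hS.submatrix _
  have hd := psd_det_nonneg h2
  have hsym : S j i = S i j := by
    calc S j i = star (S i j) := by rw [hS.isHermitian.apply]
    _ = S i j := rfl
  rw [Matrix.det_fin_two] at hd
  simp only [Matrix.submatrix_apply, Matrix.cons_val_zero, Matrix.cons_val_one,
    Matrix.head_cons, h1, hsym] at hd
  constructor <;> nlinarith

/-- Triangle inequality for the angles `arccos (S i j)` attached to a positive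
semidefinite matrix with unit diagonal. -/
lemma psd_triangle {d : ℕ} {S : Matrix (Fin d) (Fin d) ℝ} (hS : S.PosSemidef)
    (h1 : ∀ i, S i i = 1) (i j k : Fin d) :
    arccos (S i k) ≤ arccos (S i j) + arccos (S j k) := by
  obtain ⟨ha1, ha2⟩ := psd_entry_bounds hS h1 i j
  obtain ⟨hb1, hb2⟩ := psd_entry_bounds hS h1 j k
  obtain ⟨hc1, hc2⟩ := psd_entry_bounds hS h1 i k
  set a := S i j with hadef
  set b := S j k with hbdef
  set c := S i k with hcdef
  set α := arccos a with hα
  set β := arccos b with hβ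
  have hca : cos α = a := cos_arccos ha1 ha2
  have hcb : cos β = b := cos_arccos hb1 hb2
  have hα0 : 0 ≤ α := arccos_nonneg a
  have hαπ : α ≤ π := arccos_le_pi a
  have hβ0 : 0 ≤ β := arccos_nonneg b
  have hβπ : β ≤ π := arccos_le_pi b
  by_cases hab : π ≤ α + β
  · exact le_trans (arccos_le_pi c) hab
  push_neg at hab
  -- determinant of the 3x3 principal submatrix
  have h3 : (S.submatrix ![i,j,k] ![i,j,k]).PosSemidef := hS.submatrix _
  have hd := psd_det_nonneg h3
  rw [Matrix.det_fin_three] at hd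
  have hsym : ∀ p q : Fin d, S p q = S q p := fun p q => by
    calc S p q = star (S q p) := by rw [hS.isHermitian.apply]
    _ = S q p := rfl
  simp only [Matrix.submatrix_apply, Matrix.cons_val_zero, Matrix.cons_val_one,
    Matrix.head_cons, Matrix.cons_val_two, Matrix.tail_cons, h1] at hd
  rw [hsym j i, hsym k i, hsym k j] at hd
  rw [← hadef, ← hbdef, ← hcdef] at hd
  have hsa : sin α ^ 2 = 1 - a ^ 2 := by
    rw [← hca]; nlinarith [sin_sq_add_cos_sq α]
  have hsb : sin β ^ 2 = 1 - b ^ 2 := by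
    rw [← hcb]; nlinarith [sin_sq_add_cos_sq β]
  have hsa0 : 0 ≤ sin α := sin_nonneg_of_nonneg_of_le_pi hα0 hαπ
  have hsb0 : 0 ≤ sin β := sin_nonneg_of_nonneg_of_le_pi hβ0 hβπ
  have key : cos (α + β) ≤ c := by
    by_contra hlt
    push_neg at hlt
    rw [cos_add, hca, hcb] at hlt
    nlinarith [mul_nonneg hsa0 hsb0]
  have h5 : arcsin (cos (α + β)) ≤ arcsin c := monotone_arcsin key
  have h6 : arccos (cos (α + β)) = α + β :=
    arccos_cos (by linarith) (le_of_lt hab)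
  rw [arccos_eq_pi_div_two_sub_arcsin] at h6 ⊢
  linarith

/-- Attaching one more unit vector to a configuration, with prescribed angles `α`, `t`
to two given unit vectors at mutual angle `β`, provided the spherical triangle
inequalities hold. -/
lemma attach (n : ℕ) (u w : ℕ → ℝ) (hu : ∀ k, n ≤ k → u k = 0) (hw : ∀ k, n ≤ k → w k = 0)
    (huu : ip n u u = 1) (hww : ip n w w = 1)
    (α β t : ℝ) (huw : ip n u w = cos β)
    (hβ0 : 0 ≤ β) (hβπ : β ≤ π) (hα0 : 0 ≤ α) (hαπ : α ≤ π) (ht0 : 0 ≤ t) (htπ : t ≤ π)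
    (h1 : α ≤ β + t) (h2 : β ≤ α + t) (h3 : t ≤ α + β) (h4 : α + β + t ≤ 2 * π) :
    ∃ z : ℕ → ℝ, (∀ k, n + 1 ≤ k → z k = 0) ∧ ip (n+1) z z = 1 ∧
      ip (n+1) u z = cos α ∧ ip (n+1) w z = cos t := by
  -- generic construction from coefficients
  have main : ∀ c₀ c₁ c₂ : ℝ,
      c₀ + c₁ * cos β = cos α → c₀ * cos β + c₁ = cos t →
      c₀ * cos α + c₁ * cos t + c₂ ^ 2 = 1 →
      ∃ z : ℕ → ℝ, (∀ k, n + 1 ≤ k → z k = 0) ∧ ip (n+1) z z = 1 ∧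
        ip (n+1) u z = cos α ∧ ip (n+1) w z = cos t := by
    intro c₀ c₁ c₂ e1 e2 e3
    set z : ℕ → ℝ := fun k => c₀ * u k + c₁ * w k + c₂ * (if k = n then 1 else 0) with hz
    have hzn : z n = c₂ := by simp [hz, hu n le_rfl, hw n le_rfl]
    have hipz : ∀ x : ℕ → ℝ, ip n x z = c₀ * ip n x u + c₁ * ip n x w := by
      intro x
      have : ∀ k ∈ Finset.range n, x k * z k = c₀ * (x k * u k) + c₁ * (x k * w k) := by
        intro k hk
        have : k ≠ n := (Finset.mem_range.mp hk).ne
        simp only [hz, if_neg this]; ring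
      rw [ip, Finset.sum_congr rfl this, Finset.sum_add_distrib, ← Finset.mul_sum,
        ← Finset.mul_sum]
      rfl
    refine ⟨z, ?_, ?_, ?_, ?_⟩
    · intro k hk
      have hk1 : k ≠ n := by omega
      simp [hz, hu k (by omega), hw k (by omega), hk1]
    · rw [ip_succ, hzn, hipz, ip_comm n z u, ip_comm n z w, hipz, hipz, huu, hww,
        ip_comm n w u, huw]
      linear_combination c₀ * e1 + c₁ * e2 + e3
    · rw [ip_succ, hu n le_rfl, hipz, huu, huw]
      linear_combination e1
    · rw [ip_succ, hw n le_rfl, hipz, ip_comm n w u, huw, hww]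
      linear_combination e2
  rcases eq_or_lt_of_le hβ0 with hb0 | hbpos
  · -- β = 0 : forced α = t
    have hβ' : β = 0 := hb0.symm
    have hαt : α = t := le_antisymm (by linarith) (by linarith)
    refine main (0 : ℝ) (cos t) (sin t) ?_ ?_ ?_ <;>
      simp [hβ', hαt] <;> nlinarith [sin_sq_add_cos_sq t]
  rcases eq_or_lt_of_le hβπ with hbpi | hblt
  · -- β = π : forced α = π - t
    have hαt : α = π - t := by linarith
    refine main (-cos t) (0 : ℝ) (sin t) ?_ ?_ ?_ <;>
      simp [hbpi, hαt, cos_pi_sub] <;> nlinarith [sin_sq_add_cos_sq t]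
  · -- generic case : 0 < β < π
    have hs : 0 < sin β := sin_pos_of_pos_of_lt_pi hbpos hblt
    set A := cos α
    set B := cos β
    set C := cos t
    have hsb : sin β ^ 2 = 1 - B ^ 2 := by nlinarith [sin_sq_add_cos_sq β]
    set D := 1 + 2 * A * B * C - A ^ 2 - B ^ 2 - C ^ 2 with hD
    have hD0 : 0 ≤ D := by
      have f1 : cos (α + β) ≤ C := by
        by_cases hab : α + β ≤ π
        · exact Real.cos_le_cos_of_nonneg_of_le_pi ht0 hab h3
        · push_neg at hab
          have : cos (α + β) = cos (2 * π - (α + β)) := by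
            rw [Real.cos_two_pi_sub]
          rw [this]
          exact Real.cos_le_cos_of_nonneg_of_le_pi ht0 (by linarith) (by linarith)
      have f2 : C ≤ cos (α - β) := by
        have habs : |α - β| ≤ t := abs_le.mpr ⟨by linarith, by linarith⟩
        calc C ≤ cos |α - β| :=
              Real.cos_le_cos_of_nonneg_of_le_pi (abs_nonneg _) htπ habs
        _ = cos (α - β) := Real.cos_abs _
      have hprod : 0 ≤ (C - cos (α + β)) * (cos (α - β) - C) :=
        mul_nonneg (by linarith) (by linarith)
      have hsa : sin α ^ 2 = 1 - A ^ 2 := by nlinarith [sin_sq_add_cos_sq α]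
      calc (0:ℝ) ≤ (C - cos (α + β)) * (cos (α - β) - C) := hprod
      _ = D := by
          rw [cos_add, cos_sub]
          linear_combination (sin β ^ 2) * hsa + (1 - A ^ 2) * hsb
    have hs2 : sin β ^ 2 ≠ 0 := by positivity
    have hsne : sin β ≠ 0 := hs.ne'
    clear huw huu hww hu hw
    refine main ((A - C * B) / sin β ^ 2) ((C - A * B) / sin β ^ 2)
      (Real.sqrt D / sin β) ?_ ?_ ?_ <;> clear main
    · field_simp
      linear_combination (-A) * hsb
    · field_simp
      linear_combination (-C) * hsb
    · have hsq : Real.sqrt D ^ 2 = D := Real.sq_sqrt hD0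
      field_simp
      linear_combination hsq + hD - hsb

/-- A chain of unit vectors with prescribed consecutive angles (all in `[0, π/2]`)
and prescribed angle `α ∈ [0, π]` between the first and the last vector, provided the
cycle conditions hold. -/
lemma chain : ∀ m : ℕ, 1 ≤ m → ∀ θ : ℕ → ℝ, ∀ α : ℝ,
    (∀ j < m, 0 ≤ θ j ∧ θ j ≤ π / 2) → 0 ≤ α → α ≤ π →
    α ≤ ∑ j ∈ Finset.range m, θ j →
    (∀ k < m, 2 * θ k ≤ α + ∑ j ∈ Finset.range m, θ j) →
    ∃ v : ℕ → ℕ → ℝ,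
      (∀ j k, m < k → v j k = 0) ∧
      (∀ j ≤ m, ip (m+1) (v j) (v j) = 1) ∧
      (∀ j < m, ip (m+1) (v j) (v (j+1)) = cos (θ j)) ∧
      ip (m+1) (v 0) (v m) = cos α := by
  intro m hm
  induction m, hm using Nat.le_induction with
  | base =>
    intro θ α hIcc hα0 hαπ hsum hcond
    have hsum1 : ∑ j ∈ Finset.range 1, θ j = θ 0 := by simp
    have hαθ : α = θ 0 := by
      have := hcond 0 (by norm_num)
      rw [hsum1] at hsum this
      linarith
    refine ⟨fun j k => if j = 0 then (if k = 0 then 1 else 0)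
      else (if k = 0 then cos (θ 0) else if k = 1 then sin (θ 0) else 0), ?_, ?_, ?_, ?_⟩
    · intro j k hk
      have h1 : k ≠ 0 := by omega
      have h2 : k ≠ 1 := by omega
      simp [h1, h2]
    · intro j hj
      interval_cases j <;>
        simp [ip, Finset.sum_range_succ] <;> nlinarith [sin_sq_add_cos_sq (θ 0)]
    · intro j hj
      interval_cases j
      simp [ip, Finset.sum_range_succ]
    · rw [hαθ]
      simp [ip, Finset.sum_range_succ]
  | succ m hm ih =>
    intro θ α hIcc hα0 hαπ hsum hcond
    have hπ := Real.pi_pos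
    set S := ∑ j ∈ Finset.range m, θ j with hS
    set t := θ m with ht
    have hsum' : ∑ j ∈ Finset.range (m+1), θ j = S + t := Finset.sum_range_succ θ m
    rw [hsum'] at hsum hcond
    have ht0 : 0 ≤ t := (hIcc m (Nat.lt_succ_self m)).1
    have htπ2 : t ≤ π / 2 := (hIcc m (Nat.lt_succ_self m)).2
    have hne : (Finset.range m).Nonempty := ⟨0, Finset.mem_range.mpr hm⟩
    set B := (Finset.range m).sup' hne θ with hB
    obtain ⟨k₀, hk₀m, hk₀⟩ := Finset.exists_mem_eq_sup' hne θ
    have hk₀m' : k₀ < m := Finset.mem_range.mp hk₀m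
    have hBk : B = θ k₀ := by rw [hB, hk₀]
    have hB0 : 0 ≤ B := by rw [hBk]; exact (hIcc k₀ (by omega)).1
    have hBπ2 : B ≤ π / 2 := by rw [hBk]; exact (hIcc k₀ (by omega)).2
    have hBS : B ≤ S := by
      rw [hBk, hS]
      exact Finset.single_le_sum (fun j hj => (hIcc j (by simp at hj; omega)).1) hk₀m
    have hS0 : 0 ≤ S := Finset.sum_nonneg fun j hj => (hIcc j (by simp at hj; omega)).1
    have hcondB : 2 * B ≤ α + (S + t) := by rw [hBk]; exact hcond k₀ (by omega)
    set β := |α - t| ⊔ (0 ⊔ (2 * B - S)) with hβ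
    have habs_le : ∀ c : ℝ, -c ≤ α - t → α - t ≤ c → |α - t| ≤ c :=
      fun c h h' => abs_le.mpr ⟨h, h'⟩
    have hβ0 : 0 ≤ β := le_trans (le_max_left _ _) (le_max_right _ _)
    have hβlb1 : α - t ≤ β := le_trans (le_abs_self _) (le_max_left _ _)
    have hβlb2 : t - α ≤ β := by
      have : t - α ≤ |α - t| := by rw [abs_sub_comm]; exact le_abs_self _
      exact le_trans this (le_max_left _ _)
    have hβlb3 : 2 * B - S ≤ β := le_trans (le_max_right _ _) (le_max_right _ _)
    have hcndm : 2 * θ m ≤ α + (S + t) := hcond m (by omega)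
    have hβπ : β ≤ π := by
      apply max_le (habs_le π (by linarith) (by linarith))
      apply max_le (by linarith) (by linarith)
    have hβS : β ≤ S := by
      apply max_le (habs_le S (by linarith) (by linarith))
      apply max_le hS0 (by linarith)
    have hcondβ : ∀ k < m, 2 * θ k ≤ β + S := by
      intro k hk
      have : θ k ≤ B := Finset.le_sup' θ (Finset.mem_range.mpr hk)
      linarith
    obtain ⟨v, hvsupp, hvnorm, hvedge, hvclose⟩ :=
      ih θ β (fun j hj => hIcc j (by omega)) hβ0 hβπ hβS hcondβ
    -- spherical triangle conditions
    have h1 : α ≤ β + t := by linarith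
    have h2 : β ≤ α + t := by
      apply max_le (habs_le (α + t) (by linarith) (by linarith))
      apply max_le (by linarith) (by linarith)
    have h3 : t ≤ α + β := by linarith
    have h4 : α + β + t ≤ 2 * π := by
      have : β ≤ 2 * π - α - t := by
        apply max_le (habs_le (2*π - α - t) (by linarith) (by linarith))
        apply max_le (by linarith) (by linarith)
      linarith
    obtain ⟨z, hzsupp, hznorm, hzu, hzw⟩ :=
      attach (m+1) (v 0) (v m) (fun k hk => hvsupp 0 k (by omega))
        (fun k hk => hvsupp m k (by omega)) (hvnorm 0 (by omega)) (hvnorm m le_rfl)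
        α β t hvclose hβ0 hβπ hα0 hαπ (by linarith) (by linarith) h1 h2 h3 h4
    refine ⟨fun j => if j = m + 1 then z else v j, ?_, ?_, ?_, ?_⟩
    · intro j k hk
      by_cases hj : j = m + 1
      · simp only [hj, if_pos rfl]; exact hzsupp k (by omega)
      · simp only [if_neg hj]; exact hvsupp j k (by omega)
    · intro j hj
      by_cases hjm : j = m + 1
      · simp only [hjm, if_pos rfl]; exact hznorm
      · have hj' : j ≤ m := by omega
        simp only [if_neg hjm]
        rw [ip_succ, hvsupp j (m+1) (by omega), hvnorm j hj']
        ring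
    · intro j hj
      by_cases hjm : j = m
      · subst hjm
        have hne1 : j ≠ j + 1 := by omega
        simp only [if_neg hne1, if_pos rfl]
        exact hzw
      · have hj' : j < m := by omega
        have hne1 : j ≠ m + 1 := by omega
        have hne2 : j + 1 ≠ m + 1 := by omega
        simp only [if_neg hne1, if_neg hne2]
        rw [ip_succ, hvsupp j (m+1) (by omega), hvedge j hj']
        ring
    · have hne1 : (0:ℕ) ≠ m + 1 := by omega
      simp only [if_neg hne1, if_pos rfl]
      exact hzu

end Stmt6Aux

open Stmt6Aux Matrix
open Fin.NatCast

/-- Positive semi-definite completability of a `d`-cycle of correlations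
`cos θ₀, …, cos θ_{d-1}` (with all but possibly the first angle at most `π/2`):
a completion exists if and only if `2 max_j θ_j ≤ ∑ j θ_j`. -/
theorem stmt6 {d : ℕ} [NeZero d] (hd : 3 ≤ d) (θ : Fin d → ℝ)
    (hθ : ∀ j, θ j ∈ Set.Icc (0 : ℝ) Real.pi)
    (hθ' : ∀ j : Fin d, j.val ≠ 0 → θ j ≤ Real.pi / 2) :
    (∃ S : Matrix (Fin d) (Fin d) ℝ, S.PosSemidef ∧ (∀ i, S i i = 1) ∧
        ∀ j : Fin d, S j (j + 1) = Real.cos (θ j)) ↔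
      2 * (Finset.univ.sup' (Finset.univ_nonempty_iff.mpr ⟨⟨0, by omega⟩⟩) θ) ≤ ∑ j, θ j := by
  have hπ := Real.pi_pos
  have hd0 : 0 < d := by omega
  constructor
  · rintro ⟨S, hS, hdiag, hedge⟩
    obtain ⟨k, -, hk⟩ :=
      Finset.exists_mem_eq_sup' (Finset.univ_nonempty_iff.mpr ⟨⟨0, by omega⟩⟩) θ
    have hk' : Finset.univ.sup' (Finset.univ_nonempty_iff.mpr ⟨⟨0, by omega⟩⟩) θ = θ k := hk
    rw [hk']
    have harc : ∀ j : Fin d, arccos (S j (j+1)) = θ j := fun j => by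
      rw [hedge j, arccos_cos (hθ j).1 (hθ j).2]
    have key : ∀ n : ℕ, arccos (S (k+1) (k+1 + (n : Fin d))) ≤
        ∑ i ∈ Finset.range n, θ (k+1 + (i : Fin d)) := by
      intro n
      induction n with
      | zero => simp [hdiag, arccos_one]
      | succ n ihn =>
        have hcast : ((n+1 : ℕ) : Fin d) = (n : Fin d) + 1 := by push_cast; ring
        rw [hcast, Finset.sum_range_succ, ← add_assoc]
        have tri := psd_triangle hS hdiag (k+1) (k+1 + (n : Fin d)) (k+1 + (n : Fin d) + 1)
        rw [harc (k+1 + (n : Fin d))] at tri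
        linarith
    have hlast := key (d-1)
    have hm1 : ((d - 1 : ℕ) : Fin d) = -1 := by
      have h : ((d - 1 : ℕ) : Fin d) + 1 = 0 := by
        have h2 : ((d - 1 : ℕ) : Fin d) + ((1:ℕ) : Fin d) = ((d - 1 + 1 : ℕ) : Fin d) :=
          (Nat.cast_add _ _).symm
        rw [Nat.cast_one] at h2
        rw [h2, show d - 1 + 1 = d by omega, Fin.natCast_self]
      exact eq_neg_of_add_eq_zero_left h
    have hid : k + 1 + ((d - 1 : ℕ) : Fin d) = k := by rw [hm1, add_neg_cancel_right]
    rw [hid] at hlast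
    have hsym : S (k+1) k = S k (k+1) := by
      calc S (k+1) k = star (S k (k+1)) := by rw [hS.isHermitian.apply]
      _ = S k (k+1) := rfl
    rw [hsym, harc k] at hlast
    have hsumall : ∑ i ∈ Finset.range d, θ (k+1 + (i : Fin d)) = ∑ j, θ j := by
      rw [← Fin.sum_univ_eq_sum_range (fun i => θ (k + 1 + ((i : ℕ) : Fin d))) d]
      simp only [Fin.cast_val_eq_self]
      exact Fintype.sum_equiv (Equiv.addLeft (k+1)) _ _ (fun i => rfl)
    have hsum2 : ∑ i ∈ Finset.range ((d-1)+1), θ (k+1 + (i : Fin d)) = ∑ j, θ j := by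
      rw [show (d-1)+1 = d by omega]; exact hsumall
    rw [Finset.sum_range_succ, hid] at hsum2
    linarith
  · intro htot
    set T := ∑ j, θ j with hT
    have hsupT : ∀ j, 2 * θ j ≤ T := by
      intro j
      have hsup1 : θ j ≤ Finset.univ.sup' (Finset.univ_nonempty_iff.mpr ⟨⟨0, by omega⟩⟩) θ :=
        Finset.le_sup' θ (Finset.mem_univ j)
      linarith
    set m := d - 1 with hmdef
    have hm1 : 1 ≤ m := by omega
    have hmd : m + 1 = d := by omega
    set θ' : ℕ → ℝ := fun i => θ (((i+1 : ℕ) : Fin d)) with hθ'def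
    set α := θ (0 : Fin d) with hα
    have hvalcast : ∀ a : ℕ, a < d → (((a : ℕ) : Fin d)).val = a := fun a ha => by
      rw [Fin.val_natCast]; exact Nat.mod_eq_of_lt ha
    have hθ'Icc : ∀ j < m, 0 ≤ θ' j ∧ θ' j ≤ π / 2 := by
      intro j hj
      refine ⟨(hθ _).1, hθ' _ ?_⟩
      rw [hvalcast (j+1) (by omega)]
      omega
    have hsplit : ∑ j ∈ Finset.range m, θ' j + α = T := by
      have h1 : T = ∑ i ∈ Finset.range d, θ ((i : ℕ) : Fin d) := by
        rw [← Fin.sum_univ_eq_sum_range (fun i => θ ((i : ℕ) : Fin d)) d]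
        simp only [Fin.cast_val_eq_self]
        rfl
      have h1' : T = ∑ i ∈ Finset.range (m + 1), θ ((i : ℕ) : Fin d) := by
        rw [hmd]; exact h1
      rw [h1', Finset.sum_range_succ']
      simp only [Nat.cast_zero]
      rfl
    have hα0 : 0 ≤ α := (hθ _).1
    have hαπ : α ≤ π := (hθ _).2
    have hsum : α ≤ ∑ j ∈ Finset.range m, θ' j := by
      have := hsupT 0
      linarith
    have hcond : ∀ k < m, 2 * θ' k ≤ α + ∑ j ∈ Finset.range m, θ' j := by
      intro k hk
      have := hsupT (((k+1 : ℕ) : Fin d))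
      have h2 : θ' k = θ (((k+1 : ℕ) : Fin d)) := rfl
      rw [h2]
      linarith
    obtain ⟨v, hsupp, hnorm, hedge', hclose⟩ := chain m hm1 θ' α hθ'Icc hα0 hαπ hsum hcond
    have hnorm' : ∀ j ≤ m, ip d (v j) (v j) = 1 := hmd ▸ hnorm
    have hedge'' : ∀ j < m, ip d (v j) (v (j+1)) = cos (θ' j) := hmd ▸ hedge'
    have hclose' : ip d (v 0) (v m) = cos α := hmd ▸ hclose
    set w : Fin d → ℕ → ℝ := fun i => v ((i.val + (d - 1)) % d) with hw
    set A : Matrix (Fin d) (Fin d) ℝ := Matrix.of (fun k i => w i k.val) with hA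
    have hSapply : ∀ i j, (Aᴴ * A) i j = ip d (w i) (w j) := by
      intro i j
      rw [Matrix.mul_apply, ip, ← Fin.sum_univ_eq_sum_range (fun k => w i k * w j k) d]
      apply Finset.sum_congr rfl
      intro x _
      simp [hA, Matrix.conjTranspose_apply]
    have hmod : ∀ a : ℕ, a < d → (a + (d-1)) % d = (if a = 0 then d-1 else a-1) := by
      intro a ha
      by_cases h0 : a = 0
      · rw [if_pos h0, h0, zero_add]
        exact Nat.mod_eq_of_lt (by omega)
      · rw [if_neg h0, show a + (d-1) = (a-1) + d by omega, Nat.add_mod_right,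
          Nat.mod_eq_of_lt (by omega)]
    refine ⟨Aᴴ * A, Matrix.posSemidef_conjTranspose_mul_self A, ?_, ?_⟩
    · intro i
      rw [hSapply]
      have hlt : (i.val + (d - 1)) % d < d := Nat.mod_lt _ hd0
      exact hnorm' _ (by omega)
    · intro j
      rw [hSapply]
      have hjv : j.val < d := j.isLt
      have h1d : 1 % d = 1 := Nat.mod_eq_of_lt (by omega)
      have hv1 : ((j + 1 : Fin d)).val = (j.val + 1) % d := by
        rw [Fin.add_def]
        simp [Fin.val_one', h1d]
      by_cases h0 : j.val = 0
      · -- first edge: uses the closing entry of the chain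
        have hc1 : (j.val + (d - 1)) % d = m := by rw [hmod _ hjv, if_pos h0]
        have hc2 : (((j+1 : Fin d)).val + (d - 1)) % d = 0 := by
          have e1 : (0 + 1) % d = 1 := by simpa using h1d
          rw [hv1, h0, e1, show 1 + (d - 1) = d by omega, Nat.mod_self]
        simp only [hw]
        rw [hc1, hc2, ip_comm, hclose', hα]
        have hj0 : j = 0 := Fin.ext (by simp [h0])
        rw [hj0]
      · -- other edges: chain edges
        have hc1 : (j.val + (d - 1)) % d = j.val - 1 := by rw [hmod _ hjv, if_neg h0]
        have hc2 : (((j+1 : Fin d)).val + (d - 1)) % d = j.val := by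
          rw [hv1]
          by_cases hlast : j.val = d - 1
          · rw [hlast, show d - 1 + 1 = d by omega, Nat.mod_self, zero_add,
              Nat.mod_eq_of_lt (by omega)]
          · have e2 : (j.val + 1) % d = j.val + 1 := Nat.mod_eq_of_lt (by omega)
            rw [e2, hmod (j.val+1) (by omega), if_neg (by omega)]
            omega
        simp only [hw]
        rw [hc1, hc2]
        have he := hedge'' (j.val - 1) (by omega)
        rw [show j.val - 1 + 1 = j.val from by omega] at he
        rw [he]
        congr 1
        show θ (((j.val - 1 + 1 : ℕ) : Fin d)) = θ j
        rw [show j.val - 1 + 1 = j.val from by omega, Fin.cast_val_eq_self]
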